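/- Let B ⊆ ℝ^n be an arbitrary subset, f : B → ℝ a function, C > 0 a constant, and p ↦ a_p a (not necessarily continuous) map B → ℝ^n. Suppose that (1) for all x, p ∈ B, |f(x) − f(p) − ⟨x − p, a_p⟩| ≤ C‖x − p‖², and (2) for all p, q ∈ B and all x ∈ ℝ^n, f(p) + ⟨x − p, a_p⟩ − C‖x − p‖² ≤ f(q) + ⟨x − q, a_q⟩ + C‖x − q‖². Then there exists a function F : ℝ^n → ℝ of class C^{1,1}_loc (that is, F is continuously differentiable and its derivative DF is Lipschitz on every compact subset of ℝ^n) such that F restricted to B equals f. -/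

import Mathlib

open scoped RealInnerProductSpace
open Filter

namespace Stmt5

variable {n : ℕ}

section

variable (B : Set (EuclideanSpace ℝ (Fin n))) (f : EuclideanSpace ℝ (Fin n) → ℝ)
  (C : ℝ) (a : EuclideanSpace ℝ (Fin n) → EuclideanSpace ℝ (Fin n))

/-- upper paraboloid (shifted by `C‖y‖²`). -/
noncomputable def U (q y : EuclideanSpace ℝ (Fin n)) : ℝ :=
  f q + ⟪y - q, a q⟫ + C * ‖y - q‖ ^ 2 + C * ‖y‖ ^ 2

/-- affine minorant predicate -/
def M (ξ : EuclideanSpace ℝ (Fin n)) (c : ℝ) : Prop :=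
  ∀ q ∈ B, ∀ y : EuclideanSpace ℝ (Fin n), ⟪y, ξ⟫ + c ≤ U f C a q y

def S (x : EuclideanSpace ℝ (Fin n)) : Set ℝ :=
  { v | ∃ ξ c, M B f C a ξ c ∧ v = ⟪x, ξ⟫ + c }

noncomputable def phi (x : EuclideanSpace ℝ (Fin n)) : ℝ := sSup (S B f C a x)

/-- the lower paraboloid at `p`, shifted by `C‖y‖²`, is affine. -/
lemma ell_eq (p y : EuclideanSpace ℝ (Fin n)) :
    ⟪y, a p + (2 * C) • p⟫ + (f p - ⟪p, a p⟫ - C * ‖p‖ ^ 2)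
      = f p + ⟪y - p, a p⟫ - C * ‖y - p‖ ^ 2 + C * ‖y‖ ^ 2 := by
  have h1 : ‖y - p‖ ^ 2 = ‖y‖ ^ 2 - 2 * ⟪y, p⟫ + ‖p‖ ^ 2 := norm_sub_sq_real y p
  have h2 : ⟪y - p, a p⟫ = ⟪y, a p⟫ - ⟪p, a p⟫ := inner_sub_left y p (a p)
  have h3 : ⟪y, a p + (2 * C) • p⟫ = ⟪y, a p⟫ + (2 * C) * ⟪y, p⟫ := by
    rw [inner_add_right, real_inner_smul_right]
  rw [h1, h2, h3]; ring

lemma M_ell (h2 : ∀ p ∈ B, ∀ q ∈ B, ∀ x : EuclideanSpace ℝ (Fin n),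
      f p + ⟪x - p, a p⟫ - C * ‖x - p‖ ^ 2 ≤ f q + ⟪x - q, a q⟫ + C * ‖x - q‖ ^ 2)
    {p : EuclideanSpace ℝ (Fin n)} (hp : p ∈ B) :
    M B f C a (a p + (2 * C) • p) (f p - ⟪p, a p⟫ - C * ‖p‖ ^ 2) := by
  intro q hq y
  rw [ell_eq]
  have := h2 p hp q hq y
  simp only [U]
  linarith

lemma S_nonempty (h2 : ∀ p ∈ B, ∀ q ∈ B, ∀ x : EuclideanSpace ℝ (Fin n),
      f p + ⟪x - p, a p⟫ - C * ‖x - p‖ ^ 2 ≤ f q + ⟪x - q, a q⟫ + C * ‖x - q‖ ^ 2)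
    {p₀ : EuclideanSpace ℝ (Fin n)} (hp₀ : p₀ ∈ B) (x : EuclideanSpace ℝ (Fin n)) :
    (S B f C a x).Nonempty :=
  ⟨_, ⟨_, _, M_ell B f C a h2 hp₀, rfl⟩⟩

lemma S_bdd {p₀ : EuclideanSpace ℝ (Fin n)} (hp₀ : p₀ ∈ B) (x : EuclideanSpace ℝ (Fin n)) :
    BddAbove (S B f C a x) := by
  refine ⟨U f C a p₀ x, ?_⟩
  rintro v ⟨ξ, c, hM, rfl⟩
  exact hM p₀ hp₀ x

lemma minorant_le_phi (h2 : ∀ p ∈ B, ∀ q ∈ B, ∀ x : EuclideanSpace ℝ (Fin n),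
      f p + ⟪x - p, a p⟫ - C * ‖x - p‖ ^ 2 ≤ f q + ⟪x - q, a q⟫ + C * ‖x - q‖ ^ 2)
    {p₀ : EuclideanSpace ℝ (Fin n)} (hp₀ : p₀ ∈ B) {ξ : EuclideanSpace ℝ (Fin n)} {c : ℝ}
    (hM : M B f C a ξ c) (x : EuclideanSpace ℝ (Fin n)) :
    ⟪x, ξ⟫ + c ≤ phi B f C a x :=
  le_csSup (S_bdd B f C a hp₀ x) ⟨ξ, c, hM, rfl⟩

lemma exists_near (h2 : ∀ p ∈ B, ∀ q ∈ B, ∀ x : EuclideanSpace ℝ (Fin n),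
      f p + ⟪x - p, a p⟫ - C * ‖x - p‖ ^ 2 ≤ f q + ⟪x - q, a q⟫ + C * ‖x - q‖ ^ 2)
    {p₀ : EuclideanSpace ℝ (Fin n)} (hp₀ : p₀ ∈ B) (x : EuclideanSpace ℝ (Fin n))
    {ε : ℝ} (hε : 0 < ε) :
    ∃ ξ c, M B f C a ξ c ∧ phi B f C a x - ε < ⟪x, ξ⟫ + c := by
  have hlt : phi B f C a x - ε < sSup (S B f C a x) := by
    have : phi B f C a x - ε < phi B f C a x := by linarith
    exact this
  obtain ⟨v, ⟨ξ, c, hM, rfl⟩, hv⟩ :=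
    exists_lt_of_lt_csSup (S_nonempty B f C a h2 hp₀ x) hlt
  exact ⟨ξ, c, hM, hv⟩

lemma U_mid (q y h : EuclideanSpace ℝ (Fin n)) :
    U f C a q (y + h) + U f C a q (y - h) = 2 * U f C a q y + 4 * C * ‖h‖ ^ 2 := by
  have e1 : y + h - q = (y - q) + h := by abel
  have e2 : y - h - q = (y - q) - h := by abel
  simp only [U, e1, e2, norm_add_sq_real, norm_sub_sq_real, inner_add_left, inner_sub_left]
  ring

lemma M_mid (hC : 0 < C) {ξ₁ ξ₂ : EuclideanSpace ℝ (Fin n)} {c₁ c₂ : ℝ}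
    (hM₁ : M B f C a ξ₁ c₁) (hM₂ : M B f C a ξ₂ c₂) :
    M B f C a ((1/2 : ℝ) • (ξ₁ + ξ₂)) ((c₁ + c₂)/2 + ‖ξ₁ - ξ₂‖ ^ 2 / (32 * C)) := by
  intro q hq y
  set d := ξ₁ - ξ₂ with hd
  set h' : EuclideanSpace ℝ (Fin n) := (1/(8*C)) • d with hh'
  have hA := hM₁ q hq (y + h')
  have hB := hM₂ q hq (y - h')
  have mid := U_mid f C a q y h'
  have iA : ⟪y + h', ξ₁⟫ = ⟪y, ξ₁⟫ + ⟪h', ξ₁⟫ := inner_add_left y h' ξ₁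
  have iB : ⟪y - h', ξ₂⟫ = ⟪y, ξ₂⟫ - ⟪h', ξ₂⟫ := inner_sub_left y h' ξ₂
  have iC : ⟪h', ξ₁⟫ - ⟪h', ξ₂⟫ = (1/(8*C)) * ‖d‖ ^ 2 := by
    rw [← inner_sub_right, ← hd, hh', real_inner_smul_left, real_inner_self_eq_norm_sq]
  have nh : ‖h'‖ ^ 2 = (1/(8*C))^2 * ‖d‖ ^ 2 := by
    rw [hh', norm_smul, mul_pow, Real.norm_eq_abs, sq_abs]
  have iG : ⟪y, (1/2 : ℝ) • (ξ₁ + ξ₂)⟫ = (1/2) * (⟪y, ξ₁⟫ + ⟪y, ξ₂⟫) := by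
    rw [real_inner_smul_right, inner_add_right]
  have quad : (1/(8*C)) * ‖d‖ ^ 2 - 4*C*((1/(8*C))^2 * ‖d‖ ^ 2) = 2 * (‖d‖ ^ 2 / (32*C)) := by
    field_simp
    ring
  have nh4 : 4*C*‖h'‖ ^ 2 = 4*C*((1/(8*C))^2 * ‖d‖ ^ 2) := by rw [nh]
  rw [iG]
  linarith [hA, hB, mid, iA, iB, iC, nh4, quad]

lemma amgm (hC : 0 < C) (h d : EuclideanSpace ℝ (Fin n)) :
    ⟪h, d⟫ ≤ 4*C*‖h‖ ^ 2 + ‖d‖ ^ 2 / (16*C) := by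
  have hle := real_inner_le_norm h d
  have ht : ‖d‖ ^ 2 = 16*C*(‖d‖ ^ 2 / (16*C)) := by field_simp
  nlinarith [sq_nonneg (8*C*‖h‖ - ‖d‖), norm_nonneg h, norm_nonneg d]

lemma key_ineq (hC : 0 < C)
    (h2 : ∀ p ∈ B, ∀ q ∈ B, ∀ x : EuclideanSpace ℝ (Fin n),
      f p + ⟪x - p, a p⟫ - C * ‖x - p‖ ^ 2 ≤ f q + ⟪x - q, a q⟫ + C * ‖x - q‖ ^ 2)
    {p₀ : EuclideanSpace ℝ (Fin n)} (hp₀ : p₀ ∈ B) (x h : EuclideanSpace ℝ (Fin n)) :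
    phi B f C a (x + h) + phi B f C a (x - h) ≤ 2 * phi B f C a x + 4*C*‖h‖ ^ 2 := by
  refine le_of_forall_pos_le_add fun ε hε => ?_
  obtain ⟨ξ₁, c₁, hM₁, hn₁⟩ := exists_near B f C a h2 hp₀ (x + h) (half_pos hε)
  obtain ⟨ξ₂, c₂, hM₂, hn₂⟩ := exists_near B f C a h2 hp₀ (x - h) (half_pos hε)
  have hmid := minorant_le_phi B f C a h2 hp₀ (M_mid B f C a hC hM₁ hM₂) x
  have i1 : ⟪x + h, ξ₁⟫ = ⟪x, ξ₁⟫ + ⟪h, ξ₁⟫ := inner_add_left x h ξ₁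
  have i2 : ⟪x - h, ξ₂⟫ = ⟪x, ξ₂⟫ - ⟪h, ξ₂⟫ := inner_sub_left x h ξ₂
  have i3 : ⟪x, (1/2 : ℝ) • (ξ₁ + ξ₂)⟫ = (1/2) * (⟪x, ξ₁⟫ + ⟪x, ξ₂⟫) := by
    rw [real_inner_smul_right, inner_add_right]
  have i4 : ⟪h, ξ₁⟫ - ⟪h, ξ₂⟫ = ⟪h, ξ₁ - ξ₂⟫ := (inner_sub_right h ξ₁ ξ₂).symm
  have iag := amgm C hC h (ξ₁ - ξ₂)
  have half : ‖ξ₁ - ξ₂‖ ^ 2 / (16*C) = 2 * (‖ξ₁ - ξ₂‖ ^ 2 / (32*C)) := by ring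
  linarith [hn₁, hn₂, hmid, i1, i2, i3, i4, iag, half]

lemma eps_subgrad (h2 : ∀ p ∈ B, ∀ q ∈ B, ∀ x : EuclideanSpace ℝ (Fin n),
      f p + ⟪x - p, a p⟫ - C * ‖x - p‖ ^ 2 ≤ f q + ⟪x - q, a q⟫ + C * ‖x - q‖ ^ 2)
    {p₀ : EuclideanSpace ℝ (Fin n)} (hp₀ : p₀ ∈ B) (x : EuclideanSpace ℝ (Fin n))
    {ε : ℝ} (hε : 0 < ε) :
    ∃ ξ : EuclideanSpace ℝ (Fin n), ∀ z, phi B f C a x - ε + ⟪z - x, ξ⟫ ≤ phi B f C a z := by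
  obtain ⟨ξ, c, hM, hn⟩ := exists_near B f C a h2 hp₀ x hε
  refine ⟨ξ, fun z => ?_⟩
  have h1 := minorant_le_phi B f C a h2 hp₀ hM z
  have h3 : ⟪z - x, ξ⟫ = ⟪z, ξ⟫ - ⟪x, ξ⟫ := inner_sub_left z x ξ
  linarith

lemma subgrad (hC : 0 < C)
    (h2 : ∀ p ∈ B, ∀ q ∈ B, ∀ x : EuclideanSpace ℝ (Fin n),
      f p + ⟪x - p, a p⟫ - C * ‖x - p‖ ^ 2 ≤ f q + ⟪x - q, a q⟫ + C * ‖x - q‖ ^ 2)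
    {p₀ : EuclideanSpace ℝ (Fin n)} (hp₀ : p₀ ∈ B) (x : EuclideanSpace ℝ (Fin n)) :
    ∃ ξ : EuclideanSpace ℝ (Fin n), ∀ z, phi B f C a x + ⟪z - x, ξ⟫ ≤ phi B f C a z := by
  have hpos : ∀ k : ℕ, (0:ℝ) < 1/((k:ℝ)+1) := fun k => by positivity
  choose u hu using fun k : ℕ => eps_subgrad B f C a h2 hp₀ x (hpos k)
  have lower : ∀ (k : ℕ) (h : EuclideanSpace ℝ (Fin n)),
      phi B f C a x - 1/((k:ℝ)+1) + ⟪h, u k⟫ ≤ phi B f C a (x + h) := by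
    intro k h
    have := hu k (x + h)
    have e : (x + h) - x = h := by abel
    rwa [e] at this
  have upper : ∀ (k : ℕ) (h : EuclideanSpace ℝ (Fin n)),
      phi B f C a (x + h) ≤ phi B f C a x + 1/((k:ℝ)+1) + ⟪h, u k⟫ + 4*C*‖h‖ ^ 2 := by
    intro k h
    have hKI := key_ineq B f C a hC h2 hp₀ x h
    have hlow := hu k (x - h)
    have e : (x - h) - x = -h := by abel
    rw [e, inner_neg_left] at hlow
    linarith
  have pair : ∀ j k : ℕ, ‖u j - u k‖ ^ 2 ≤ 16*C*(1/((j:ℝ)+1) + 1/((k:ℝ)+1)) := by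
    intro j k
    set d := u j - u k with hd
    set h : EuclideanSpace ℝ (Fin n) := (1/(8*C)) • d with hh
    have h1 := lower j h
    have h2' := upper k h
    have i1 : ⟪h, u j⟫ - ⟪h, u k⟫ = (1/(8*C)) * ‖d‖ ^ 2 := by
      rw [← inner_sub_right, ← hd, hh, real_inner_smul_left, real_inner_self_eq_norm_sq]
    have nh : ‖h‖ ^ 2 = (1/(8*C))^2 * ‖d‖ ^ 2 := by
      rw [hh, norm_smul, mul_pow, Real.norm_eq_abs, sq_abs]
    have c4 : 4*C*‖h‖ ^ 2 = 4*C*((1/(8*C))^2 * ‖d‖ ^ 2) := by rw [nh]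
    have quad : (1/(8*C))*‖d‖ ^ 2 - 4*C*((1/(8*C))^2*‖d‖ ^ 2) = ‖d‖ ^ 2/(16*C) := by
      field_simp; ring
    have hstep : ‖d‖ ^ 2/(16*C) ≤ 1/((j:ℝ)+1) + 1/((k:ℝ)+1) := by linarith
    have hrw : ‖d‖ ^ 2 = 16*C*(‖d‖ ^ 2/(16*C)) := by field_simp
    rw [hrw]
    have h16 : (0:ℝ) ≤ 16*C := by linarith
    exact mul_le_mul_of_nonneg_left hstep h16
  have hcauchy : CauchySeq u := by
    apply cauchySeq_of_le_tendsto_0 (b := fun N : ℕ => Real.sqrt (32*C/((N:ℝ)+1)))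
    · intro j k N hj hk
      rw [dist_eq_norm]
      apply Real.le_sqrt_of_sq_le
      have hjk := pair j k
      have m1 : 1/((j:ℝ)+1) ≤ 1/((N:ℝ)+1) := by
        apply one_div_le_one_div_of_le
        · positivity
        · have : (N:ℝ) ≤ (j:ℝ) := by exact_mod_cast hj
          linarith
      have m2 : 1/((k:ℝ)+1) ≤ 1/((N:ℝ)+1) := by
        apply one_div_le_one_div_of_le
        · positivity
        · have : (N:ℝ) ≤ (k:ℝ) := by exact_mod_cast hk
          linarith
      have : 16*C*(1/((j:ℝ)+1) + 1/((k:ℝ)+1)) ≤ 32*C/((N:ℝ)+1) := by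
        have : 1/((j:ℝ)+1) + 1/((k:ℝ)+1) ≤ 2/((N:ℝ)+1) := by
          have e2 : (2:ℝ)/((N:ℝ)+1) = 1/((N:ℝ)+1) + 1/((N:ℝ)+1) := by ring
          rw [e2]; exact add_le_add m1 m2
        calc 16*C*(1/((j:ℝ)+1) + 1/((k:ℝ)+1)) ≤ 16*C*(2/((N:ℝ)+1)) :=
              mul_le_mul_of_nonneg_left this (by linarith)
          _ = 32*C/((N:ℝ)+1) := by ring
      linarith
    · have hb : Filter.Tendsto (fun N : ℕ => 32*C/((N:ℝ)+1)) atTop (nhds 0) := by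
        have := tendsto_one_div_add_atTop_nhds_zero_nat.const_mul (32*C)
        simpa [mul_one_div, div_eq_mul_inv] using this
      simpa using hb.sqrt
  obtain ⟨ξ, hξ⟩ := cauchySeq_tendsto_of_complete hcauchy
  refine ⟨ξ, fun z => ?_⟩
  have hk : ∀ k : ℕ, phi B f C a x - 1/((k:ℝ)+1) + ⟪z - x, u k⟫ ≤ phi B f C a z :=
    fun k => hu k z
  have ht : Filter.Tendsto (fun k : ℕ => phi B f C a x - 1/((k:ℝ)+1) + ⟪z - x, u k⟫)
      atTop (nhds (phi B f C a x - 0 + ⟪z - x, ξ⟫)) :=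
    (tendsto_const_nhds.sub tendsto_one_div_add_atTop_nhds_zero_nat).add
      (tendsto_const_nhds.inner hξ)
  have := le_of_tendsto ht (Filter.Eventually.of_forall hk)
  simpa using this

variable (hC : 0 < C)
    (h2 : ∀ p ∈ B, ∀ q ∈ B, ∀ x : EuclideanSpace ℝ (Fin n),
      f p + ⟪x - p, a p⟫ - C * ‖x - p‖ ^ 2 ≤ f q + ⟪x - q, a q⟫ + C * ‖x - q‖ ^ 2)
    {p₀ : EuclideanSpace ℝ (Fin n)} (hp₀ : p₀ ∈ B)

include hC h2 hp₀

noncomputable def grad (x : EuclideanSpace ℝ (Fin n)) : EuclideanSpace ℝ (Fin n) :=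
  (subgrad B f C a hC h2 hp₀ x).choose

lemma grad_P1 (x z : EuclideanSpace ℝ (Fin n)) :
    phi B f C a x + ⟪z - x, grad B f C a hC h2 hp₀ x⟫ ≤ phi B f C a z :=
  (subgrad B f C a hC h2 hp₀ x).choose_spec z

lemma grad_P2 (x h : EuclideanSpace ℝ (Fin n)) :
    phi B f C a (x + h) ≤ phi B f C a x + ⟪h, grad B f C a hC h2 hp₀ x⟫ + 4*C*‖h‖ ^ 2 := by
  have hKI := key_ineq B f C a hC h2 hp₀ x h
  have hlow := grad_P1 B f C a hC h2 hp₀ x (x - h)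
  have e : (x - h) - x = -h := by abel
  rw [e, inner_neg_left] at hlow
  linarith

lemma grad_lip (x y : EuclideanSpace ℝ (Fin n)) :
    ‖grad B f C a hC h2 hp₀ y - grad B f C a hC h2 hp₀ x‖ ≤ 8*C*‖y - x‖ := by
  set gx := grad B f C a hC h2 hp₀ x with hgx
  set gy := grad B f C a hC h2 hp₀ y with hgy
  set d := gy - gx with hd
  set h : EuclideanSpace ℝ (Fin n) := -((1/(8*C)) • d) with hh
  have hup := grad_P2 B f C a hC h2 hp₀ y h
  have hlow := grad_P1 B f C a hC h2 hp₀ x (y + h)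
  have hup2' := grad_P2 B f C a hC h2 hp₀ x (y - x)
  have e : x + (y - x) = y := by abel
  rw [e] at hup2'
  have i0 : (y + h) - x = (y - x) + h := by abel
  rw [i0, inner_add_left] at hlow
  have i1 : ⟪h, gx⟫ - ⟪h, gy⟫ = ⟪h, gx - gy⟫ := (inner_sub_right h gx gy).symm
  have i2 : ⟪h, gx - gy⟫ = (1/(8*C)) * ‖d‖ ^ 2 := by
    have : gx - gy = -d := by rw [hd]; abel
    rw [this, hh, inner_neg_neg, real_inner_smul_left, real_inner_self_eq_norm_sq]
  have nh : ‖h‖ ^ 2 = (1/(8*C))^2 * ‖d‖ ^ 2 := by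
    rw [hh, norm_neg, norm_smul, mul_pow, Real.norm_eq_abs, sq_abs]
  have c4 : 4*C*‖h‖ ^ 2 = 4*C*((1/(8*C))^2 * ‖d‖ ^ 2) := by rw [nh]
  have quad : (1/(8*C))*‖d‖ ^ 2 - 4*C*((1/(8*C))^2*‖d‖ ^ 2) = ‖d‖ ^ 2/(16*C) := by
    field_simp; ring
  have hstep : ‖d‖ ^ 2/(16*C) ≤ 4*C*‖y - x‖ ^ 2 := by linarith
  have hsq : ‖d‖ ^ 2 ≤ (8*C*‖y - x‖) ^ 2 := by
    have h16 : (0:ℝ) < 16*C := by linarith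
    rw [div_le_iff₀ h16] at hstep
    nlinarith [hstep]
  have h8 : (0:ℝ) ≤ 8*C*‖y - x‖ := by positivity
  have := Real.sqrt_le_sqrt hsq
  rwa [Real.sqrt_sq (norm_nonneg d), Real.sqrt_sq h8] at this

lemma phi_on_B {p : EuclideanSpace ℝ (Fin n)} (hp : p ∈ B) :
    phi B f C a p = f p + C*‖p‖ ^ 2 := by
  have hUpp : U f C a p p = f p + C*‖p‖ ^ 2 := by
    simp [U, sub_self, inner_zero_left]
  refine le_antisymm ?_ ?_
  · refine csSup_le (S_nonempty B f C a h2 hp₀ p) ?_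
    rintro v ⟨ξ, c, hM, rfl⟩
    have := hM p hp p
    rwa [hUpp] at this
  · have hmin := minorant_le_phi B f C a h2 hp₀ (M_ell B f C a h2 hp) p
    have he := ell_eq f C a p p
    rw [he] at hmin
    simpa [sub_self, inner_zero_left] using hmin

lemma hasF (x : EuclideanSpace ℝ (Fin n)) :
    HasFDerivAt (fun y => phi B f C a y - C*‖y‖ ^ 2)
      (innerSL ℝ (grad B f C a hC h2 hp₀ x - (2*C) • x)) x := by
  set gx := grad B f C a hC h2 hp₀ x with hgx
  rw [hasFDerivAt_iff_isLittleO_nhds_zero]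
  have key : ∀ h : EuclideanSpace ℝ (Fin n),
      |(phi B f C a (x + h) - C*‖x + h‖ ^ 2) - (phi B f C a x - C*‖x‖ ^ 2)
        - (innerSL ℝ (gx - (2*C) • x)) h| ≤ 5*C*‖h‖ ^ 2 := by
    intro h
    have hin : (innerSL ℝ (gx - (2*C) • x)) h = ⟪gx, h⟫ - (2*C) * ⟪x, h⟫ := by
      simp [inner_sub_left, real_inner_smul_left]
    have hnorm : ‖x + h‖ ^ 2 = ‖x‖ ^ 2 + 2*⟪x, h⟫ + ‖h‖ ^ 2 := norm_add_sq_real x h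
    have hcomm : ⟪gx, h⟫ = ⟪h, gx⟫ := real_inner_comm h gx
    have hu := grad_P2 B f C a hC h2 hp₀ x h
    have hl := grad_P1 B f C a hC h2 hp₀ x (x + h)
    have e : (x + h) - x = h := by abel
    rw [e] at hl
    rw [hin, hnorm, hcomm, abs_le]
    constructor <;> nlinarith [sq_nonneg ‖h‖, norm_nonneg h]
  rw [Asymptotics.isLittleO_iff]
  intro c hc
  rw [Metric.eventually_nhds_iff]
  refine ⟨c/(5*C), by positivity, fun {h} hdist => ?_⟩
  have hn : ‖h‖ < c/(5*C) := by
    rw [dist_zero_right] at hdist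
    exact hdist
  have := key h
  rw [Real.norm_eq_abs]
  have h5 : 5*C*‖h‖ ^ 2 ≤ c*‖h‖ := by
    have h5C : (0:ℝ) < 5*C := by linarith
    have : 5*C*‖h‖ ≤ c := by
      rw [lt_div_iff₀ h5C] at hn
      nlinarith [norm_nonneg h]
    nlinarith [norm_nonneg h]
  calc |(phi B f C a (x + h) - C*‖x + h‖ ^ 2) - (phi B f C a x - C*‖x‖ ^ 2)
        - (innerSL ℝ (gx - (2*C) • x)) h| ≤ 5*C*‖h‖ ^ 2 := key h
    _ ≤ c*‖h‖ := h5

end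

end Stmt5

lemma lip_fderiv (n : ℕ) (B : Set (EuclideanSpace ℝ (Fin n)))
    (f : EuclideanSpace ℝ (Fin n) → ℝ) (C : ℝ)
    (a : EuclideanSpace ℝ (Fin n) → EuclideanSpace ℝ (Fin n))
    (hC : 0 < C)
    (h2 : ∀ p ∈ B, ∀ q ∈ B, ∀ x : EuclideanSpace ℝ (Fin n),
      f p + ⟪x - p, a p⟫ - C * ‖x - p‖ ^ 2 ≤ f q + ⟪x - q, a q⟫ + C * ‖x - q‖ ^ 2)
    {p₀ : EuclideanSpace ℝ (Fin n)} (hp₀ : p₀ ∈ B) :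
    LipschitzWith (Real.toNNReal (10*C))
      (fderiv ℝ (fun x => Stmt5.phi B f C a x - C*‖x‖ ^ 2)) := by
  have hder : ∀ x, fderiv ℝ (fun x => Stmt5.phi B f C a x - C*‖x‖ ^ 2) x
      = innerSL ℝ (Stmt5.grad B f C a hC h2 hp₀ x - (2*C) • x) :=
    fun x => (Stmt5.hasF B f C a hC h2 hp₀ x).fderiv
  apply LipschitzWith.of_dist_le_mul
  intro x y
  rw [hder x, hder y, dist_eq_norm, ← map_sub]
  have e : (Stmt5.grad B f C a hC h2 hp₀ x - (2*C) • x)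
      - (Stmt5.grad B f C a hC h2 hp₀ y - (2*C) • y)
      = (Stmt5.grad B f C a hC h2 hp₀ x - Stmt5.grad B f C a hC h2 hp₀ y)
        - (2*C) • (x - y) := by
    rw [smul_sub]; abel
  rw [e, innerSL_apply_norm]
  have hn1 := norm_sub_le (Stmt5.grad B f C a hC h2 hp₀ x - Stmt5.grad B f C a hC h2 hp₀ y)
    ((2*C) • (x - y))
  have hgl := Stmt5.grad_lip B f C a hC h2 hp₀ y x
  have h3 : ‖(2*C) • (x - y)‖ = 2*C*‖x - y‖ := by
    rw [norm_smul, Real.norm_eq_abs, abs_of_pos (by linarith)]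
  have hco : (↑(Real.toNNReal (10*C)) : ℝ) = 10*C := Real.coe_toNNReal _ (by linarith)
  rw [hco, dist_eq_norm]
  linarith

/-- Whitney-type extension: if `f : B → ℝ` (for an arbitrary `B ⊆ ℝ^n`) admits global upper
and lower support paraboloids of opening `C` (condition 1) whose lower paraboloids stay below
the upper ones (condition 2), then `f` extends to a `C^{1,1}_loc` function `F : ℝ^n → ℝ`,
i.e. `F` is `C^1` and its derivative is Lipschitz on every compact set. -/
theorem stmt_5 (n : ℕ) (B : Set (EuclideanSpace ℝ (Fin n)))
    (f : EuclideanSpace ℝ (Fin n) → ℝ) (C : ℝ) (hC : 0 < C)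
    (a : EuclideanSpace ℝ (Fin n) → EuclideanSpace ℝ (Fin n))
    (h1 : ∀ x ∈ B, ∀ p ∈ B, abs (f x - f p - ⟪x - p, a p⟫) ≤ C * ‖x - p‖ ^ 2)
    (h2 : ∀ p ∈ B, ∀ q ∈ B, ∀ x : EuclideanSpace ℝ (Fin n),
      f p + ⟪x - p, a p⟫ - C * ‖x - p‖ ^ 2 ≤ f q + ⟪x - q, a q⟫ + C * ‖x - q‖ ^ 2) :
    ∃ F : EuclideanSpace ℝ (Fin n) → ℝ,
      (∀ x ∈ B, F x = f x) ∧ ContDiff ℝ 1 F ∧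
        ∀ K : Set (EuclideanSpace ℝ (Fin n)), IsCompact K →
          ∃ L : NNReal, LipschitzOnWith L (fderiv ℝ F) K := by
  classical
  rcases B.eq_empty_or_nonempty with hB | ⟨p₀, hp₀⟩
  · subst hB
    refine ⟨fun _ => 0, by simp, contDiff_const, fun K _ => ⟨0, ?_⟩⟩
    have hc : (fderiv ℝ (fun _ : EuclideanSpace ℝ (Fin n) => (0:ℝ)))
        = fun _ => 0 := by
      funext x
      exact fderiv_const_apply 0
    rw [hc]
    exact (LipschitzWith.const 0).lipschitzOnWith
  · refine ⟨fun x => Stmt5.phi B f C a x - C*‖x‖ ^ 2, ?_, ?_, ?_⟩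
    · intro x hx
      show Stmt5.phi B f C a x - C*‖x‖ ^ 2 = f x
      rw [Stmt5.phi_on_B B f C a hC h2 hp₀ hx]
      ring
    · rw [contDiff_one_iff_fderiv]
      refine ⟨fun x => (Stmt5.hasF B f C a hC h2 hp₀ x).differentiableAt, ?_⟩
      exact (lip_fderiv n B f C a hC h2 hp₀).continuous
    · intro K _
      exact ⟨Real.toNNReal (10*C), (lip_fderiv n B f C a hC h2 hp₀).lipschitzOnWith⟩
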